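/- Let 0 < ε < 1 be fixed. There exists a constant A ≥ 1 such that for all a, b ∈ D with A·e^{−R} ≤ dist_P(a,b) ≤ 1, and for all automorphisms τ_a, τ_b of D with τ_a(0) = a and τ_b(0) = b, there exists ξ ∈ D_R with dist_P(τ_a(ξ), τ_b(ξ)) > ε. -/

import Mathlib

open Set Complex

noncomputable section

/-- The inverse hyperbolic tangent `tanh⁻¹ x = ½ log((1+x)/(1-x))`. -/
def arTanh (x : ℝ) : ℝ := Real.log ((1 + x) / (1 - x)) / 2

/-- The Poincaré distance on the unit disc:
`dist_P(w₁,w₂) = tanh⁻¹ (|w₁ - w₂| / |1 - w̄₁ w₂|)`. -/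
def distP (w₁ w₂ : ℂ) : ℝ :=
  arTanh (‖w₁ - w₂‖ / ‖1 - (starRingEnd ℂ) w₁ * w₂‖)

/-- `D_R`, the disc of center `0` and of hyperbolic radius `R`, i.e. `D_R = r·D`
with `R = log((1+r)/(1-r))`, that is, `r = tanh (R/2)`. -/
def hyperDisc (R : ℝ) : Set ℂ := {z : ℂ | ‖z‖ < Real.tanh (R / 2)}

end

/-- An automorphism of the unit disc: a rotated Möbius transformation
`z ↦ e^{iθ} (z - w)/(1 - w̄ z)` with `|w| < 1`. -/
def IsDiscAut (f : ℂ → ℂ) : Prop :=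
  ∃ (θ : ℝ) (w : ℂ), ‖w‖ < 1 ∧
    ∀ z : ℂ, f z = Complex.exp (θ * Complex.I) * (z - w) / (1 - (starRingEnd ℂ) w * z)

private lemma key_id (z w : ℂ) :
    Complex.normSq (1 - (starRingEnd ℂ) z * w) =
      Complex.normSq (z - w) + (1 - Complex.normSq z) * (1 - Complex.normSq w) := by
  simp only [Complex.normSq_apply, Complex.sub_re, Complex.sub_im, Complex.mul_re,
    Complex.mul_im, Complex.one_re, Complex.one_im, Complex.conj_re, Complex.conj_im]
  ring

private lemma normSq_lt_one {z : ℂ} (h : norm z < 1) : Complex.normSq z < 1 := by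
  rw [← Complex.sq_norm]; nlinarith [norm_nonneg z]

private lemma abs_sub_lt_abs {z w : ℂ} (hz : norm z < 1) (hw : norm w < 1) :
    norm (z - w) < norm (1 - (starRingEnd ℂ) z * w) := by
  have hk := key_id z w
  have h1 : Complex.normSq (z - w) < Complex.normSq (1 - (starRingEnd ℂ) z * w) := by
    nlinarith [normSq_lt_one hz, normSq_lt_one hw]
  rw [← Complex.sq_norm, ← Complex.sq_norm] at h1
  nlinarith [norm_nonneg (z - w), norm_nonneg (1 - (starRingEnd ℂ) z * w)]

private lemma one_sub_ne {z w : ℂ} (hz : norm z < 1) (hw : norm w < 1) :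
    1 - (starRingEnd ℂ) z * w ≠ 0 := by
  intro h
  have h2 := abs_sub_lt_abs hz hw
  rw [h] at h2
  simp at h2
  nlinarith [norm_nonneg (z - w)]

private lemma tanh_formula (x : ℝ) :
    Real.tanh x = (Real.exp (2*x) - 1)/(Real.exp (2*x) + 1) := by
  rw [Real.tanh_eq_sinh_div_cosh, Real.sinh_eq, Real.cosh_eq, two_mul, Real.exp_add, Real.exp_neg]
  have h := Real.exp_pos x
  field_simp

private lemma final_step (ε p dd M : ℝ) (hε0 : 0 < ε) (hε1 : ε < 1)
    (hppos : 0 ≤ p) (hdd0 : 0 ≤ dd)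
    (hKz : dd^2 = p^2 + M) (hMpos : 0 < M) (hcore : 20 * M < p^2) :
    ε < arTanh (p / dd) := by
  have hpd2 : p^2 < dd^2 := by rw [hKz]; linarith
  have hddpos : 0 < dd := by
    rcases hdd0.lt_or_eq with h | h
    · exact h
    · exfalso; rw [← h] at hpd2; nlinarith
  have hpd : p < dd := by nlinarith
  set E := Real.exp (2*ε) with hE
  have hE1 : 1 < E := by
    rw [hE]
    have := Real.exp_lt_exp.mpr (show (0:ℝ) < 2*ε by linarith)
    rwa [Real.exp_zero] at this
  have hE74 : E < 7.4 := by
    have h1 : E < Real.exp 2 := Real.exp_lt_exp.mpr (by linarith)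
    have h2 : Real.exp 2 = Real.exp 1 * Real.exp 1 := by
      rw [← Real.exp_add]; norm_num
    nlinarith [Real.exp_one_lt_d9, Real.exp_pos 1]
  have h21 : 20 * dd^2 < 21 * p^2 := by rw [hKz]; linarith
  have hstep : dd * (E - 1) < p * (E + 1) := by
    have k1 : 21*(E-1)^2 ≤ 20*(E+1)^2 := by nlinarith
    have hsq : (dd*(E-1))^2 < (p*(E+1))^2 := by
      nlinarith [mul_lt_mul_of_pos_right h21 (pow_pos (by linarith : (0:ℝ) < E - 1) 2), k1,
        sq_nonneg p]
    nlinarith [hsq, mul_nonneg hdd0 (by linarith : (0:ℝ) ≤ E - 1),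
      mul_nonneg hppos (by linarith : (0:ℝ) ≤ E + 1)]
  unfold arTanh
  have hdne : dd ≠ 0 := ne_of_gt hddpos
  have hfrac : (1 + p/dd)/(1 - p/dd) = (dd + p)/(dd - p) := by
    rw [div_eq_div_iff (by
      have : p/dd < 1 := (div_lt_one hddpos).mpr hpd
      linarith) (by linarith)]
    field_simp
  have hEfrac : E < (dd + p)/(dd - p) := by
    rw [lt_div_iff₀ (by linarith)]
    nlinarith [hstep]
  have hlog : Real.log E < Real.log ((1 + p/dd)/(1 - p/dd)) := by
    rw [hfrac]
    exact Real.log_lt_log (by linarith) hEfrac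
  rw [hE, Real.log_exp] at hlog
  linarith

set_option maxHeartbeats 1000000 in
private lemma main_lemma (R ε : ℝ) (hε0 : 0 < ε) (hε1 : ε < 1) (a b : ℂ)
    (ha : norm a < 1) (hb : norm b < 1)
    (ea eb u v : ℂ) (hu : norm u < 1) (hv : norm v < 1)
    (hea1 : norm ea = 1) (heb1 : norm eb = 1)
    (hnea : Complex.normSq ea = 1) (hneb : Complex.normSq eb = 1)
    (hau : a = -(ea * u)) (hbv : b = -(eb * v))
    (r : ℝ) (hr0 : 0 ≤ r) (hr1 : r < 1) (h1r2 : 0 < 1 - r^2)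
    (hrb : 1 - r^2 ≤ 11 * Real.exp (-R))
    (τa τb : ℂ → ℂ)
    (hfa : ∀ z : ℂ, τa z = ea * (z - u) / (1 - (starRingEnd ℂ) u * z))
    (hfb : ∀ z : ℂ, τb z = eb * (z - v) / (1 - (starRingEnd ℂ) v * z))
    (habne : 1 - (starRingEnd ℂ) a * b ≠ 0)
    (habpos : 0 < norm (1 - (starRingEnd ℂ) a * b))
    (hqlow : 50 * Real.exp (-R) ≤ norm (a - b) / norm (1 - (starRingEnd ℂ) a * b)) :
    ∀ x : ℂ, norm x = r →
      norm (a - b) ≤ norm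
        (ea*(x - u)*(1 - (starRingEnd ℂ) v * x) - eb*(x - v)*(1 - (starRingEnd ℂ) u * x)) →
      ε < distP (τa x) (τb x) := by
  set q := norm (a - b) / norm (1 - (starRingEnd ℂ) a * b) with hq
  intro x hxr hFx
  have hx1 : norm x < 1 := by rw [hxr]; exact hr1
  have hdu : (1 - (starRingEnd ℂ) u * x) ≠ 0 := one_sub_ne hu hx1
  have hdv : (1 - (starRingEnd ℂ) v * x) ≠ 0 := one_sub_ne hv hx1
  have hda : 0 < Complex.normSq (1 - (starRingEnd ℂ) u * x) := Complex.normSq_pos.mpr hdu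
  have hdb : 0 < Complex.normSq (1 - (starRingEnd ℂ) v * x) := Complex.normSq_pos.mpr hdv
  set z1 := τa x with hz1
  set z2 := τb x with hz2
  have hz1e : z1 * (1 - (starRingEnd ℂ) u * x) = ea * (x - u) := by
    rw [hz1, hfa x]; exact div_mul_cancel₀ _ hdu
  have hz2e : z2 * (1 - (starRingEnd ℂ) v * x) = eb * (x - v) := by
    rw [hz2, hfb x]; exact div_mul_cancel₀ _ hdv
  have hz1lt : norm z1 < 1 := by
    have h1 : norm z1 * norm (1 - (starRingEnd ℂ) u * x) = norm (x - u) := by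
      rw [← norm_mul, hz1e, norm_mul, hea1, one_mul]
    have h2 : norm (x - u) < norm (1 - (starRingEnd ℂ) u * x) := by
      rw [norm_sub_rev]; exact abs_sub_lt_abs hu hx1
    have h3 : 0 < norm (1 - (starRingEnd ℂ) u * x) := norm_pos_iff.mpr hdu
    nlinarith [norm_nonneg z1]
  have hz2lt : norm z2 < 1 := by
    have h1 : norm z2 * norm (1 - (starRingEnd ℂ) v * x) = norm (x - v) := by
      rw [← norm_mul, hz2e, norm_mul, heb1, one_mul]
    have h2 : norm (x - v) < norm (1 - (starRingEnd ℂ) v * x) := by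
      rw [norm_sub_rev]; exact abs_sub_lt_abs hv hx1
    have h3 : 0 < norm (1 - (starRingEnd ℂ) v * x) := norm_pos_iff.mpr hdv
    nlinarith [norm_nonneg z2]
  have hx2 : Complex.normSq x = r^2 := by rw [← Complex.sq_norm, hxr]
  have hM1 : (1 - Complex.normSq z1) * Complex.normSq (1 - (starRingEnd ℂ) u * x)
      = (1 - Complex.normSq u) * (1 - r^2) := by
    have h1 : Complex.normSq z1 * Complex.normSq (1 - (starRingEnd ℂ) u * x)
        = Complex.normSq (x - u) := by
      rw [← Complex.normSq_mul, hz1e, Complex.normSq_mul, hnea, one_mul]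
    have h2 := key_id u x
    have h3 : Complex.normSq (u - x) = Complex.normSq (x - u) := by
      rw [show u - x = -(x - u) by ring, Complex.normSq_neg]
    rw [hx2] at h2
    linear_combination h2 - h1 + h3
  have hM2 : (1 - Complex.normSq z2) * Complex.normSq (1 - (starRingEnd ℂ) v * x)
      = (1 - Complex.normSq v) * (1 - r^2) := by
    have h1 : Complex.normSq z2 * Complex.normSq (1 - (starRingEnd ℂ) v * x)
        = Complex.normSq (x - v) := by
      rw [← Complex.normSq_mul, hz2e, Complex.normSq_mul, hneb, one_mul]
    have h2 := key_id v x
    have h3 : Complex.normSq (v - x) = Complex.normSq (x - v) := by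
      rw [show v - x = -(x - v) by ring, Complex.normSq_neg]
    rw [hx2] at h2
    linear_combination h2 - h1 + h3
  have hQ : (z1 - z2) * (1 - (starRingEnd ℂ) u * x) * (1 - (starRingEnd ℂ) v * x)
      = ea*(x - u)*(1 - (starRingEnd ℂ) v * x) - eb*(x - v)*(1 - (starRingEnd ℂ) u * x) := by
    rw [hz1, hz2, hfa x, hfb x]
    have e1 := div_mul_cancel₀ (ea*(x-u)) hdu
    have e2 := div_mul_cancel₀ (eb*(x-v)) hdv
    linear_combination (1 - (starRingEnd ℂ) v * x) * e1 - (1 - (starRingEnd ℂ) u * x) * e2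
  have hPda : Complex.normSq (a - b) ≤
      Complex.normSq (z1 - z2) * Complex.normSq (1 - (starRingEnd ℂ) u * x)
        * Complex.normSq (1 - (starRingEnd ℂ) v * x) := by
    have h2 : Complex.normSq (a - b) ≤ Complex.normSq
        (ea*(x - u)*(1 - (starRingEnd ℂ) v * x) - eb*(x - v)*(1 - (starRingEnd ℂ) u * x)) := by
      rw [← Complex.sq_norm, ← Complex.sq_norm]
      exact pow_le_pow_left₀ (norm_nonneg _) hFx 2
    rw [← hQ, Complex.normSq_mul, Complex.normSq_mul] at h2
    exact h2
  have hnu1 : Complex.normSq u < 1 := normSq_lt_one hu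
  have hnv1 : Complex.normSq v < 1 := normSq_lt_one hv
  have hnu0 : 0 ≤ Complex.normSq u := Complex.normSq_nonneg u
  have hnv0 : 0 ≤ Complex.normSq v := Complex.normSq_nonneg v
  have hpos_uv : 0 < (1 - Complex.normSq u) * (1 - Complex.normSq v) := by nlinarith
  have hKab := key_id a b
  have hna : Complex.normSq a = Complex.normSq u := by
    rw [hau, Complex.normSq_neg, Complex.normSq_mul, hnea, one_mul]
  have hnb : Complex.normSq b = Complex.normSq v := by
    rw [hbv, Complex.normSq_neg, Complex.normSq_mul, hneb, one_mul]
  rw [hna, hnb] at hKab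
  have hstep1 : (1 - Complex.normSq u) * (1 - Complex.normSq v)
      ≤ Complex.normSq (1 - (starRingEnd ℂ) a * b) := by
    linarith [Complex.normSq_nonneg (a - b)]
  have hab2 : Complex.normSq (a - b) = q^2 * Complex.normSq (1 - (starRingEnd ℂ) a * b) := by
    have h1 : q * norm (1 - (starRingEnd ℂ) a * b) = norm (a - b) :=
      div_mul_cancel₀ _ (ne_of_gt habpos)
    rw [← Complex.sq_norm, ← Complex.sq_norm, ← h1]
    ring
  have he2R : (0:ℝ) < Real.exp (-R) := Real.exp_pos _
  have hq2 : 2500 * (Real.exp (-R))^2 ≤ q^2 := by nlinarith [hqlow, he2R]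
  have hr2b : (1 - r^2)^2 ≤ 121 * (Real.exp (-R))^2 := by nlinarith [hrb, h1r2]
  have hDpos : 0 < Complex.normSq (1 - (starRingEnd ℂ) a * b) := Complex.normSq_pos.mpr habne
  have hmain1 : 20 * ((1 - Complex.normSq u)*(1 - Complex.normSq v)) * (1 - r^2)^2
      < Complex.normSq (a - b) := by
    have h1 : 2500*(Real.exp (-R))^2 * ((1 - Complex.normSq u)*(1 - Complex.normSq v))
        ≤ Complex.normSq (a - b) := by
      rw [hab2]
      have := mul_le_mul hq2 hstep1 hpos_uv.le (by positivity)
      nlinarith [this]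
    nlinarith [hr2b, hpos_uv, he2R, mul_pos (mul_pos he2R he2R) hpos_uv]
  have hLda : (1 - Complex.normSq z1) * (1 - Complex.normSq z2)
      * (Complex.normSq (1 - (starRingEnd ℂ) u * x) * Complex.normSq (1 - (starRingEnd ℂ) v * x))
      = (1 - Complex.normSq u)*(1 - Complex.normSq v) * (1 - r^2)^2 := by
    linear_combination ((1 - Complex.normSq z2) * Complex.normSq (1 - (starRingEnd ℂ) v * x)) * hM1
      + ((1 - Complex.normSq u)*(1 - r^2)) * hM2
  have hcore : 20 * ((1 - Complex.normSq z1) * (1 - Complex.normSq z2))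
      < Complex.normSq (z1 - z2) := by
    have hdd : 0 < Complex.normSq (1 - (starRingEnd ℂ) u * x) * Complex.normSq (1 - (starRingEnd ℂ) v * x) :=
      mul_pos hda hdb
    have hbig : 20 * ((1 - Complex.normSq z1) * (1 - Complex.normSq z2)) * (Complex.normSq (1 - (starRingEnd ℂ) u * x) * Complex.normSq (1 - (starRingEnd ℂ) v * x))
        < Complex.normSq (z1 - z2) * (Complex.normSq (1 - (starRingEnd ℂ) u * x) * Complex.normSq (1 - (starRingEnd ℂ) v * x)) := by
      calc 20 * ((1 - Complex.normSq z1) * (1 - Complex.normSq z2)) * (Complex.normSq (1 - (starRingEnd ℂ) u * x) * Complex.normSq (1 - (starRingEnd ℂ) v * x))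
          = 20 * ((1 - Complex.normSq u)*(1 - Complex.normSq v)) * (1 - r^2)^2 := by
            linear_combination 20 * hLda
        _ < Complex.normSq (a - b) := hmain1
        _ ≤ Complex.normSq (z1 - z2) * Complex.normSq (1 - (starRingEnd ℂ) u * x) * Complex.normSq (1 - (starRingEnd ℂ) v * x) := hPda
        _ = _ := by ring
    exact lt_of_mul_lt_mul_right hbig hdd.le
  have hKz := key_id z1 z2
  have hMpos : 0 < (1 - Complex.normSq z1) * (1 - Complex.normSq z2) :=
    mul_pos (sub_pos.mpr (normSq_lt_one hz1lt)) (sub_pos.mpr (normSq_lt_one hz2lt))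
  have hgoal : distP z1 z2 = arTanh (norm (z1 - z2) / norm (1 - (starRingEnd ℂ) z1 * z2)) := rfl
  rw [hgoal]
  exact final_step ε _ _ _ hε0 hε1 (norm_nonneg _) (norm_nonneg _)
    (by rw [Complex.sq_norm, Complex.sq_norm]; linarith [hKz]) hMpos
    (by rw [Complex.sq_norm]; exact hcore)

set_option maxHeartbeats 1000000 in
/-- for fixed `0 < ε < 1` there is `A ≥ 1` such that whenever
`A e^{-R} ≤ dist_P(a,b) ≤ 1`, any automorphisms `τ_a, τ_b` of `D` with
`τ_a(0) = a`, `τ_b(0) = b` satisfy `dist_P(τ_a(ξ), τ_b(ξ)) > ε` for some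
`ξ ∈ D_R`. -/
theorem separated_points_separated_automorphisms (ε : ℝ) (hε0 : 0 < ε) (hε1 : ε < 1) :
    ∃ A : ℝ, 1 ≤ A ∧ ∀ (R : ℝ), 0 < R → ∀ a b : ℂ,
    ‖a‖ < 1 → ‖b‖ < 1 →
    A * Real.exp (-R) ≤ distP a b → distP a b ≤ 1 →
    ∀ τa τb : ℂ → ℂ, IsDiscAut τa → IsDiscAut τb → τa 0 = a → τb 0 = b →
      ∃ ξ ∈ hyperDisc R, ε < distP (τa ξ) (τb ξ) := by
  refine ⟨100, by norm_num, ?_⟩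
  intro R hR a b ha hb hlow hhigh τa τb hIa hIb ha0 hb0
  obtain ⟨α, u, hu, hfa⟩ := hIa
  obtain ⟨β, v, hv, hfb⟩ := hIb
  set ea := Complex.exp ((α:ℂ) * Complex.I) with hea
  set eb := Complex.exp ((β:ℂ) * Complex.I) with heb
  have hea1 : norm ea = 1 := Complex.norm_exp_ofReal_mul_I α
  have heb1 : norm eb = 1 := Complex.norm_exp_ofReal_mul_I β
  have hnea : Complex.normSq ea = 1 := by rw [← Complex.sq_norm, hea1]; norm_num
  have hneb : Complex.normSq eb = 1 := by rw [← Complex.sq_norm, heb1]; norm_num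
  have hau : a = -(ea * u) := by
    have h := hfa 0
    rw [ha0] at h
    simpa using h
  have hbv : b = -(eb * v) := by
    have h := hfb 0
    rw [hb0] at h
    simpa using h
  -- numeric setup
  have hexpR : (0:ℝ) < Real.exp R := Real.exp_pos R
  have hδ1 : 100 * Real.exp (-R) ≤ 1 := hlow.trans hhigh
  have hER : (100:ℝ) ≤ Real.exp R := by
    rw [Real.exp_neg, ← div_eq_mul_inv, div_le_one hexpR] at hδ1
    exact hδ1
  have hR2 : 2 < R := by
    by_contra h
    push_neg at h
    have h1 : Real.exp R ≤ Real.exp 2 := Real.exp_le_exp.mpr h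
    have h2 : Real.exp 2 = Real.exp 1 * Real.exp 1 := by
      rw [← Real.exp_add]; norm_num
    nlinarith [Real.exp_one_lt_d9, Real.exp_pos 1]
  set E' := Real.exp (R - 1) with hE'
  have hE'1 : (1:ℝ) ≤ E' := Real.one_le_exp (by linarith)
  have hE'pos : (0:ℝ) < E' := by linarith
  have hEE' : Real.exp R = E' * Real.exp 1 := by
    rw [hE', ← Real.exp_add]; ring_nf
  set r := (E' - 1)/(E' + 1) with hrdef
  have hr0 : 0 ≤ r := div_nonneg (by linarith) (by linarith)
  have hr1 : r < 1 := by rw [hrdef, div_lt_one (by linarith)]; linarith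
  have hrtanh : r < Real.tanh (R/2) := by
    rw [tanh_formula (R/2), show 2*(R/2) = R by ring]
    have hlt : E' < Real.exp R := by
      rw [hE']; exact Real.exp_lt_exp.mpr (by linarith)
    rw [hrdef, div_lt_div_iff₀ (by linarith) (by linarith)]
    nlinarith
  have h1r2 : 0 < 1 - r^2 := by nlinarith
  have hrb : 1 - r^2 ≤ 11 * Real.exp (-R) := by
    have hform : 1 - r^2 = 4*E'/((E'+1)^2) := by
      rw [hrdef]; field_simp; ring
    rw [hform, Real.exp_neg, hEE', ← div_eq_mul_inv, div_le_div_iff₀ (by positivity) (by positivity)]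
    nlinarith [Real.exp_one_lt_d9, Real.exp_pos 1, sq_nonneg (E' - 1), sq_nonneg (E' + 1)]
  -- q facts
  have habne : 1 - (starRingEnd ℂ) a * b ≠ 0 := one_sub_ne ha hb
  have habpos : 0 < norm (1 - (starRingEnd ℂ) a * b) := norm_pos_iff.mpr habne
  set q := norm (a - b) / norm (1 - (starRingEnd ℂ) a * b) with hq
  have hq0 : 0 ≤ q := by positivity
  have hq1 : q < 1 := by rw [hq, div_lt_one habpos]; exact abs_sub_lt_abs ha hb
  have hdab : distP a b = arTanh q := rfl
  have harT : distP a b ≤ q / (1 - q) := by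
    rw [hdab]
    have h1q : (1:ℝ) - q ≠ 0 := by linarith
    have hpos : 0 < (1+q)/(1-q) := div_pos (by linarith) (by linarith)
    have hl := Real.log_le_sub_one_of_pos hpos
    have he : (1+q)/(1-q) - 1 = 2*q/(1-q) := by
      rw [div_sub_one h1q]
      ring_nf
    unfold arTanh
    rw [he] at hl
    rw [div_le_iff₀ (by norm_num : (0:ℝ) < 2)] at *
    calc Real.log ((1+q)/(1-q)) ≤ 2*q/(1-q) := hl
      _ = q/(1-q) * 2 := by ring
  have hqlow : 50 * Real.exp (-R) ≤ q := by
    have h1 : 100 * Real.exp (-R) ≤ q / (1-q) := hlow.trans harT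
    have h2 : 100 * Real.exp (-R) * (1 - q) ≤ q := by
      rw [← le_div_iff₀ (by linarith)]
      exact h1
    nlinarith [Real.exp_pos (-R), mul_nonneg (Real.exp_pos (-R)).le hq0]
  have hab : a ≠ b := by
    intro h
    have hq0' : q = 0 := by rw [hq, h]; simp
    have hd0 : distP a b = 0 := by
      rw [hdab, hq0']
      unfold arTanh
      norm_num
    rw [hd0] at hlow
    nlinarith [Real.exp_pos (-R)]
  have habs0 : 0 < norm (a - b) := norm_pos_iff.mpr (sub_ne_zero.mpr hab)
  -- construction of ξ
  set c2 := eb * (starRingEnd ℂ) u - ea * (starRingEnd ℂ) v with hc2def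
  have hc2 : c2 = -(ea * eb * (starRingEnd ℂ) (a - b)) := by
    rw [hc2def, hau, hbv]
    simp only [map_sub, map_neg, map_mul]
    have hA : ea * (starRingEnd ℂ) ea = 1 := by
      rw [Complex.mul_conj, hnea]; norm_num
    have hB : eb * (starRingEnd ℂ) eb = 1 := by
      rw [Complex.mul_conj, hneb]; norm_num
    linear_combination (-(eb * (starRingEnd ℂ) u)) * hA + (ea * (starRingEnd ℂ) v) * hB
  have hc2abs : norm c2 = norm (a - b) := by
    rw [hc2]
    simp [norm_mul, ← map_sub, Complex.norm_conj, hea1, heb1]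
  have hc2ne : c2 ≠ 0 := by
    intro h
    rw [h] at hc2abs
    simp at hc2abs
    exact (ne_of_gt habs0) hc2abs.symm
  obtain ⟨ζ, hζ⟩ : ∃ w : ℂ, w^2 = (a - b)/c2 :=
    IsAlgClosed.exists_pow_nat_eq _ (n := 2) (by norm_num)
  have hζabs : norm ζ = 1 := by
    have h1 : norm ζ ^ 2 = 1 := by
      rw [← norm_pow, hζ, norm_div, hc2abs, div_self (ne_of_gt habs0)]
    nlinarith [norm_nonneg ζ]
  set ξ := (r : ℂ) * ζ with hξdef
  have hξabs : norm ξ = r := by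
    rw [hξdef, norm_mul, hζabs, Complex.norm_real, Real.norm_eq_abs, _root_.abs_of_nonneg hr0, mul_one]
  have hmξabs : norm (-ξ) = r := by
    rw [norm_neg, hξabs]
  have hξ2 : c2 * ξ^2 = (r:ℂ)^2 * (a - b) := by
    rw [hξdef, mul_pow, hζ]
    field_simp
  have hFsum : ∀ x : ℂ,
      (ea*(x - u)*(1 - (starRingEnd ℂ) v * x) - eb*(x - v)*(1 - (starRingEnd ℂ) u * x))
      + (ea*((-x) - u)*(1 - (starRingEnd ℂ) v * (-x)) - eb*((-x) - v)*(1 - (starRingEnd ℂ) u * (-x)))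
      = 2*(c2*x^2 + (a - b)) := by
    intro x
    rw [hc2def, hau, hbv]
    ring
  have hFξ := hFsum ξ
  rw [hξ2] at hFξ
  have habssum : 2*(r^2+1)*norm (a - b) ≤
      norm (ea*(ξ - u)*(1 - (starRingEnd ℂ) v * ξ) - eb*(ξ - v)*(1 - (starRingEnd ℂ) u * ξ))
      + norm (ea*((-ξ) - u)*(1 - (starRingEnd ℂ) v * (-ξ)) - eb*((-ξ) - v)*(1 - (starRingEnd ℂ) u * (-ξ))) := by
    have hc : (2:ℂ)*((r:ℂ)^2*(a-b) + (a-b)) = (((2*(r^2+1) : ℝ)) : ℂ) * (a-b) := by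
      push_cast
      ring
    calc 2*(r^2+1)*norm (a-b)
        = norm ((((2*(r^2+1) : ℝ)) : ℂ) * (a-b)) := by
          rw [norm_mul, Complex.norm_real, Real.norm_eq_abs, _root_.abs_of_nonneg (by positivity : (0:ℝ) ≤ 2*(r^2+1))]
      _ = norm (2*((r:ℂ)^2*(a-b) + (a-b))) := by rw [hc]
      _ ≤ _ := by
          rw [← hFξ]
          exact norm_add_le _ _
  have hrsq : (0:ℝ) ≤ r^2 * norm (a - b) := by positivity
  rcases le_total
      (norm (ea*(ξ - u)*(1 - (starRingEnd ℂ) v * ξ) - eb*(ξ - v)*(1 - (starRingEnd ℂ) u * ξ)))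
      (norm (ea*((-ξ) - u)*(1 - (starRingEnd ℂ) v * (-ξ)) - eb*((-ξ) - v)*(1 - (starRingEnd ℂ) u * (-ξ)))) with hcs | hcs
  · refine ⟨-ξ, ?_, ?_⟩
    · simp only [hyperDisc, Set.mem_setOf_eq]
      rw [hmξabs]; exact hrtanh
    · exact main_lemma R ε hε0 hε1 a b ha hb ea eb u v hu hv hea1 heb1 hnea hneb hau hbv
        r hr0 hr1 h1r2 hrb τa τb hfa hfb habne habpos hqlow (-ξ) hmξabs
        (by linarith [habssum, hcs, hrsq])
  · refine ⟨ξ, ?_, ?_⟩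
    · simp only [hyperDisc, Set.mem_setOf_eq]
      rw [hξabs]; exact hrtanh
    · exact main_lemma R ε hε0 hε1 a b ha hb ea eb u v hu hv hea1 heb1 hnea hneb hau hbv
        r hr0 hr1 h1r2 hrb τa τb hfa hfb habne habpos hqlow ξ hξabs
        (by linarith [habssum, hcs, hrsq])
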